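/- For every nonzero integer n one has the identity ( n·(2(γ_i − γ_o) + σ − σ·n²)·(R^{2n} − 1)/(Θ_o + R^{2n}·Θ̄_o) )·(1 − l_n)^{−1} = q_n, where q_n = ((A_n + i·sign(n)·B)/(A_n² + B²))·μ(n); that is, the Fourier symbol of the linearized evolution operator at the trivial state admits the closed form (44). -/

import Mathlib

open Complex Filter

/-- `Θ_i = α_i + i·β_i`. -/
noncomputable def Thi (αi βi : ℝ) : ℂ := (αi : ℂ) + (βi : ℂ) * Complex.I

/-- `Θ_o = α_o + i·β_o`. -/
noncomputable def Tho (αo βo : ℝ) : ℂ := (αo : ℂ) + (βo : ℂ) * Complex.I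

/-- The multiplier `l_n` of equation (36A):
`l_n = (1 − R^{2n})·|Θ_i|² / ((sign(n)·α_i − i·β_i)·(Θ_o + R^{2n}·Θ̄_o))`. -/
noncomputable def lseq (αi αo βi βo R : ℝ) (n : ℤ) : ℂ :=
  (((1 - R ^ (2 * n)) * ‖Thi αi βi‖ ^ 2 : ℝ) : ℂ) /
    (((n.sign : ℂ) * (αi : ℂ) - (βi : ℂ) * Complex.I) *
      (Tho αo βo + ((R ^ (2 * n) : ℝ) : ℂ) * (starRingEnd ℂ) (Tho αo βo)))

/-- `A_n := sign(n)·((R^{2n}+1)/(R^{2n}−1))·α_o + α_i`. -/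
noncomputable def Aseq (αi αo R : ℝ) (n : ℤ) : ℝ :=
  (n.sign : ℝ) * ((R ^ (2 * n) + 1) / (R ^ (2 * n) - 1)) * αo + αi

/-- `μ(n) := |n|·(σ − 2(γ_o − γ_i) − σ·n²)`. -/
noncomputable def museq (σ γi γo : ℝ) (n : ℤ) : ℝ :=
  (|n| : ℝ) * (σ - 2 * (γo - γi) - σ * (n : ℝ) ^ 2)

/-- `q_n := ((A_n + i·sign(n)·B)/(A_n² + B²))·μ(n)` with `B := β_o − β_i`,
the Fourier symbol (44) of the linearized evolution operator. -/
noncomputable def qseq (αi αo βi βo R σ γi γo : ℝ) (n : ℤ) : ℂ :=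
  (((Aseq αi αo R n : ℝ) : ℂ) + Complex.I * (n.sign : ℂ) * ((βo - βi : ℝ) : ℂ)) /
    ((Aseq αi αo R n ^ 2 + (βo - βi) ^ 2 : ℝ) : ℂ) * ((museq σ γi γo n : ℝ) : ℂ)


private lemma fac_aux (αi αo βi βo s r A : ℝ) (hs : s = 1 ∨ s = -1) (hr1 : r ≠ 1)
    (hA : A = s*((r+1)/(r-1))*αo + αi) :
    ((s:ℂ)*αi - βi*Complex.I) * ((αo:ℂ) + βo*Complex.I + (r:ℂ)*((αo:ℂ) - βo*Complex.I))
      - (((1-r)*(αi^2+βi^2) : ℝ):ℂ)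
    = ((s*(r-1) : ℝ):ℂ) * ((s:ℂ)*αi - βi*Complex.I) * ((A:ℂ) - (s:ℂ)*((βo-βi:ℝ):ℂ)*Complex.I) := by
  have hd : r - 1 ≠ 0 := sub_ne_zero.mpr hr1
  rcases hs with hs | hs <;> subst hs <;>
  · rw [Complex.ext_iff]
    constructor <;>
      simp [Complex.mul_re, Complex.mul_im, ← Complex.ofReal_pow] <;>
      rw [hA] <;> field_simp <;> ring

private lemma key_aux (αi αo βi βo σ γi γo s r A x : ℝ)
    (hαi : 0 < αi) (hαo : 0 < αo)
    (hs : s = 1 ∨ s = -1) (hr : 0 < r) (hr1 : r ≠ 1)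
    (hA : A = s*((r+1)/(r-1))*αo + αi) (hA0 : A ≠ 0) :
    ((x:ℂ) * ((2*(γi-γo)+σ-σ*x^2 : ℝ):ℂ) * ((r - 1 : ℝ):ℂ) /
        (Tho αo βo + (r:ℂ) * (starRingEnd ℂ) (Tho αo βo))) *
      (1 - (((1-r)*(αi^2+βi^2):ℝ):ℂ) /
        (((s:ℂ)*(αi:ℂ) - (βi:ℂ)*Complex.I) *
          (Tho αo βo + (r:ℂ) * (starRingEnd ℂ) (Tho αo βo))))⁻¹
    = ((A:ℂ) + Complex.I*(s:ℂ)*((βo-βi:ℝ):ℂ)) / ((A^2+(βo-βi)^2 : ℝ):ℂ) *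
        ((s*x*(σ-2*(γo-γi)-σ*x^2) : ℝ):ℂ) := by
  have hd : r - 1 ≠ 0 := sub_ne_zero.mpr hr1
  have hTho : Tho αo βo = (αo:ℂ) + βo*Complex.I := rfl
  have hconj : (starRingEnd ℂ) (Tho αo βo) = (αo:ℂ) - βo*Complex.I := by
    simp [Tho, Complex.conj_ofReal]
    ring
  rw [hconj, hTho]
  set D : ℂ := ((αo:ℂ) + βo*Complex.I) + (r:ℂ) * ((αo:ℂ) - βo*Complex.I) with hD
  set K : ℂ := (s:ℂ)*(αi:ℂ) - (βi:ℂ)*Complex.I with hK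
  have hDne : D ≠ 0 := by
    intro h
    have := congrArg Complex.re h
    simp [hD, Complex.mul_re] at this
    nlinarith
  have hKne : K ≠ 0 := by
    intro h
    have := congrArg Complex.re h
    rcases hs with hs | hs <;> subst hs <;> simp [hK] at this <;> nlinarith
  have hfac := fac_aux αi αo βi βo s r A hs hr1 hA
  have hsd : (s*(r-1) : ℝ) ≠ 0 := by
    rcases hs with hs | hs <;> subst hs <;> simp [hd] <;> intro h <;> exact hd (by linarith)
  have hMne : ((A:ℂ) - (s:ℂ)*((βo-βi:ℝ):ℂ)*Complex.I) ≠ 0 := by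
    intro h
    have := congrArg Complex.re h
    simp [Complex.mul_re] at this
    exact hA0 this
  have hNne : K * D - (((1-r)*(αi^2+βi^2):ℝ):ℂ) ≠ 0 := by
    rw [hfac]
    exact mul_ne_zero (mul_ne_zero (Complex.ofReal_ne_zero.mpr hsd) hKne) hMne
  have hAB : (0:ℝ) < A^2 + (βo-βi)^2 := by positivity
  have h1l : (1 - (((1-r)*(αi^2+βi^2):ℝ):ℂ) / (K * D))
      = (K * D - (((1-r)*(αi^2+βi^2):ℝ):ℂ)) / (K * D) := by
    field_simp
  rw [h1l, hfac]
  rw [inv_div]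
  have hABc : ((A^2+(βo-βi)^2 : ℝ):ℂ) ≠ 0 := Complex.ofReal_ne_zero.mpr hAB.ne'
  have hsdc : ((s*(r-1) : ℝ):ℂ) ≠ 0 := Complex.ofReal_ne_zero.mpr hsd
  set X : ℂ := (x:ℂ) * ((2*(γi-γo)+σ-σ*x^2 : ℝ):ℂ) * ((r - 1 : ℝ):ℂ) with hX
  set M : ℂ := (A:ℂ) - (s:ℂ)*((βo-βi:ℝ):ℂ)*Complex.I with hM
  have cancel : ∀ (a b k c m : ℂ), b ≠ 0 → k ≠ 0 → c ≠ 0 → m ≠ 0 →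
      a / b * ((k * b) / (c * k * m)) = a / (c * m) := by
    intro a b k c m hb hk hc hm
    field_simp
  have step1 : X / D * ((K * D) / (((s*(r-1) : ℝ):ℂ) * K * M)) = X / (((s*(r-1) : ℝ):ℂ) * M) :=
    cancel X D K _ M hDne hKne hsdc hMne
  rw [step1]
  rw [div_mul_eq_mul_div, div_eq_div_iff (mul_ne_zero hsdc hMne) hABc]
  simp only [hX, hM]
  rcases hs with hs | hs <;> subst hs <;>
  · rw [Complex.ext_iff]
    constructor <;>
      simp [Complex.mul_re, Complex.mul_im, ← Complex.ofReal_pow] <;>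
      ring

/-- For every nonzero integer `n`, the Fourier symbol of the linearized
evolution operator at the trivial state admits the closed form (44):
`(n·(2(γ_i − γ_o) + σ − σn²)·(R^{2n} − 1)/(Θ_o + R^{2n}·Θ̄_o))·(1 − l_n)⁻¹ = q_n`. -/
theorem statement11 (αi αo βi βo R σ γi γo : ℝ)
    (hαi : 0 < αi) (hαo : 0 < αo) (hβi : 0 ≤ βi) (hβo : 0 ≤ βo) (hR : 2 ≤ R)
    (hσ : 0 < σ) :
    ∀ n : ℤ, n ≠ 0 →
      ((n : ℂ) * ((2 * (γi - γo) + σ - σ * (n : ℝ) ^ 2 : ℝ) : ℂ) *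
          ((R ^ (2 * n) - 1 : ℝ) : ℂ) /
          (Tho αo βo + ((R ^ (2 * n) : ℝ) : ℂ) * (starRingEnd ℂ) (Tho αo βo))) *
        (1 - lseq αi αo βi βo R n)⁻¹
      = qseq αi αo βi βo R σ γi γo n := by
  intro n hn
  have hR0 : (0:ℝ) < R := by linarith
  have hr0 : (0:ℝ) < R ^ (2*n) := zpow_pos hR0 _
  have habsTh : (‖Thi αi βi‖)^2 = αi^2+βi^2 := by
    rw [Complex.sq_norm, Thi]
    simp [Complex.normSq_apply]
    ring
  rcases hn.lt_or_gt with hneg | hpos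
  · -- n < 0
    have hsgn : n.sign = -1 := Int.sign_eq_neg_one_of_neg hneg
    have hr1 : R ^ (2*n) < 1 := zpow_lt_one_of_neg₀ (by linarith) (by omega)
    have hA : Aseq αi αo R n = (-1)*((R^(2*n)+1)/(R^(2*n)-1))*αo + αi := by
      rw [Aseq, hsgn]; norm_num
    have hA0 : Aseq αi αo R n ≠ 0 := by
      have hq : (R^(2*n)+1)/(R^(2*n)-1) < 0 :=
        div_neg_of_pos_of_neg (by linarith) (by linarith)
      rw [hA]; nlinarith
    have key' := key_aux αi αo βi βo σ γi γo (-1) (R^(2*n)) (Aseq αi αo R n) (n:ℝ)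
      hαi hαo (Or.inr rfl) hr0 hr1.ne hA hA0
    rw [lseq, qseq, museq, habsTh, hsgn, abs_of_neg (show (n:ℝ) < 0 by exact_mod_cast hneg)]
    push_cast at key' ⊢
    linear_combination key'
  · -- 0 < n
    have hsgn : n.sign = 1 := Int.sign_eq_one_of_pos hpos
    have hr1 : 1 < R ^ (2*n) := one_lt_zpow₀ (by linarith) (by omega)
    have hA : Aseq αi αo R n = (1:ℝ)*((R^(2*n)+1)/(R^(2*n)-1))*αo + αi := by
      rw [Aseq, hsgn]; norm_num
    have hA0 : Aseq αi αo R n ≠ 0 := by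
      have hq : 0 < (R^(2*n)+1)/(R^(2*n)-1) :=
        div_pos (by linarith) (by linarith)
      rw [hA]; nlinarith
    have key' := key_aux αi αo βi βo σ γi γo 1 (R^(2*n)) (Aseq αi αo R n) (n:ℝ)
      hαi hαo (Or.inl rfl) hr0 hr1.ne' hA hA0
    rw [lseq, qseq, museq, habsTh, hsgn, abs_of_pos (show (0:ℝ) < (n:ℝ) by exact_mod_cast hpos)]
    push_cast at key' ⊢
    linear_combination key'
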